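/- The function Ψ is continuous on ℝ × (ℝ ∖ {0}) × ℝ, i.e., (h, a, r) ↦ Ψ(h; a, r) is continuous at every point with a ≠ 0. -/

import Mathlib

open MeasureTheory Real Filter

noncomputable def psiF (w : ℝ → ℝ) (q : ℝ) : ℝ :=
  (1/2) * ∫ p in Set.Ioi (0:ℝ), w (q + p) * p ^ (-(1/2) : ℝ)

noncomputable def PsiF (w : ℝ → ℝ) (h a r : ℝ) : ℝ :=
  if a = 0 then 0
  else ∑' k : ℤ, (psiF w (a * ((k : ℝ) - r) + h) - psiF w (a * ((k : ℝ) - r)))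

lemma Kzero {t : ℝ} (ht : t ≤ 0) : t ^ (-(1/2) : ℝ) = 0 := by
  rcases eq_or_lt_of_le ht with h | h
  · rw [h, Real.zero_rpow (by norm_num)]
  · rw [Real.rpow_def_of_neg h]
    have : Real.cos (-(1/2) * π) = 0 := by
      rw [neg_mul, Real.cos_neg, show (1/2) * π = π / 2 by ring, Real.cos_pi_div_two]
    rw [this, mul_zero]

lemma Keq' (t : ℝ) : t ^ (-(1/2) : ℝ) = (Real.sqrt t)⁻¹ := by
  rcases le_or_gt t 0 with h | h
  · rw [Kzero h, Real.sqrt_eq_zero'.mpr h, inv_zero]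
  · rw [Real.rpow_neg h.le, Real.sqrt_eq_rpow]

lemma Knonneg' (t : ℝ) : 0 ≤ t ^ (-(1/2) : ℝ) := by
  rw [Keq']; positivity

lemma kernel_lip' {a b m : ℝ} (hm : 0 < m) (ha : m ≤ a) (hb : m ≤ b) :
    |(Real.sqrt a)⁻¹ - (Real.sqrt b)⁻¹| ≤ |a - b| / (2 * m * Real.sqrt m) := by
  have hsm : 0 < Real.sqrt m := Real.sqrt_pos.mpr hm
  have hsa : Real.sqrt m ≤ Real.sqrt a := Real.sqrt_le_sqrt ha
  have hsb : Real.sqrt m ≤ Real.sqrt b := Real.sqrt_le_sqrt hb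
  have hsa0 : 0 < Real.sqrt a := lt_of_lt_of_le hsm hsa
  have hsb0 : 0 < Real.sqrt b := lt_of_lt_of_le hsm hsb
  have hab : Real.sqrt a ^ 2 = a := Real.sq_sqrt (hm.le.trans ha)
  have hbb : Real.sqrt b ^ 2 = b := Real.sq_sqrt (hm.le.trans hb)
  have hD : (0:ℝ) < Real.sqrt a * Real.sqrt b * (Real.sqrt a + Real.sqrt b) :=
    mul_pos (mul_pos hsa0 hsb0) (add_pos hsa0 hsb0)
  have key : (Real.sqrt a)⁻¹ - (Real.sqrt b)⁻¹
      = (b - a) / ((Real.sqrt a * Real.sqrt b) * (Real.sqrt a + Real.sqrt b)) := by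
    rw [inv_sub_inv hsa0.ne' hsb0.ne', div_eq_div_iff (mul_pos hsa0 hsb0).ne' hD.ne']
    linear_combination (Real.sqrt a * Real.sqrt b) * (hbb - hab)
  rw [key, abs_div, abs_of_pos hD, abs_sub_comm b a]
  apply div_le_div_of_nonneg_left (abs_nonneg _) (show (0:ℝ) < 2*m*Real.sqrt m by positivity)
  calc 2 * m * Real.sqrt m = (Real.sqrt m * Real.sqrt m) * (Real.sqrt m + Real.sqrt m) := by
        have hmm : Real.sqrt m * Real.sqrt m = m := Real.mul_self_sqrt hm.le
        linear_combination (-(2*Real.sqrt m)) * hmm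
    _ ≤ (Real.sqrt a * Real.sqrt b) * (Real.sqrt a + Real.sqrt b) :=
        mul_le_mul (mul_le_mul hsa hsb hsm.le hsa0.le) (add_le_add hsa hsb) (by positivity)
          (by positivity)

lemma sqrt_sub_sqrt_le' (a b : ℝ) : Real.sqrt b - Real.sqrt a ≤ Real.sqrt (b - a) := by
  rcases le_or_gt b a with h | h
  · have : Real.sqrt b ≤ Real.sqrt a := Real.sqrt_le_sqrt h
    linarith [Real.sqrt_nonneg (b - a)]
  · rcases le_or_gt a 0 with ha | ha
    · have h1 : Real.sqrt a = 0 := Real.sqrt_eq_zero'.mpr ha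
      have h2 : Real.sqrt b ≤ Real.sqrt (b - a) := Real.sqrt_le_sqrt (by linarith)
      linarith
    · have hb : Real.sqrt b ≤ Real.sqrt a + Real.sqrt (b - a) := by
        have h1 : b ≤ (Real.sqrt a + Real.sqrt (b - a)) ^ 2 := by
          have e1 := Real.sq_sqrt ha.le
          have e2 := Real.sq_sqrt (show (0:ℝ) ≤ b - a by linarith)
          nlinarith [Real.sqrt_nonneg a, Real.sqrt_nonneg (b - a)]
        calc Real.sqrt b ≤ Real.sqrt ((Real.sqrt a + Real.sqrt (b - a)) ^ 2) :=
              Real.sqrt_le_sqrt h1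
          _ = Real.sqrt a + Real.sqrt (b - a) := Real.sqrt_sq (by positivity)
      linarith

lemma inv_msqrt_mono {M m : ℝ} (hM : 0 < M) (h : M ≤ m) :
    (m * Real.sqrt m)⁻¹ ≤ (M * Real.sqrt M)⁻¹ := by
  apply inv_anti₀ (by positivity)
  exact mul_le_mul h (Real.sqrt_le_sqrt h) (Real.sqrt_nonneg _) (by linarith)

lemma psiF_eq (w : ℝ → ℝ) (x : ℝ) :
    psiF w x = (1/2) * ∫ s, w s * (s - x) ^ (-(1/2) : ℝ) := by
  unfold psiF
  congr 1
  rw [setIntegral_eq_integral_of_forall_compl_eq_zero (fun p hp => ?_)]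
  · calc ∫ p, w (x + p) * p ^ (-(1/2) : ℝ)
        = ∫ p, (fun s => w s * (s - x) ^ (-(1/2) : ℝ)) (p + x) := by
          congr 1; funext p; simp only [add_sub_cancel_right]; rw [add_comm]
      _ = ∫ s, w s * (s - x) ^ (-(1/2) : ℝ) :=
          integral_add_right_eq_self (fun s => w s * (s - x) ^ (-(1/2) : ℝ)) x
  · have : p ≤ 0 := by simpa using hp
    rw [Kzero this, mul_zero]

lemma ker_int (R x : ℝ) (hR : 0 < R) :
    IntegrableOn (fun s : ℝ => (s - x) ^ (-(1/2) : ℝ)) (Set.Icc (-R) R) := by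
  rw [integrableOn_Icc_iff_integrableOn_Ioc]
  have h1 : IntervalIntegrable (fun t : ℝ => t ^ (-(1/2) : ℝ)) volume (-R - x) (R - x) :=
    intervalIntegral.intervalIntegrable_rpow' (by norm_num)
  have h2 := h1.comp_sub_right x
  have e1 : -R - x + x = -R := by ring
  have e2 : R - x + x = R := by ring
  rw [e1, e2] at h2
  exact (intervalIntegrable_iff_integrableOn_Ioc_of_le (by linarith)).mp h2

lemma int_wK (w : ℝ → ℝ) (Cw : ℝ) (hCw : ∀ y, |w y| ≤ Cw) (hwm : Continuous w)
    (R : ℝ) (hR : 0 < R) (hsupp : ∀ s, s ∉ Set.Icc (-R) R → w s = 0) (x : ℝ) :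
    Integrable (fun s => w s * (s - x) ^ (-(1/2) : ℝ)) := by
  have hker := ker_int R x hR
  have hfull : IntegrableOn (fun s => w s * (s - x) ^ (-(1/2) : ℝ)) (Set.Icc (-R) R) :=
    hker.bdd_mul (c := Cw) hwm.aestronglyMeasurable (Filter.Eventually.of_forall (fun y => by simpa using hCw y))
  have heq : (fun s => w s * (s - x) ^ (-(1/2) : ℝ))
      = Set.indicator (Set.Icc (-R) R) (fun s => w s * (s - x) ^ (-(1/2) : ℝ)) := by
    funext s
    by_cases hs : s ∈ Set.Icc (-R) R
    · rw [Set.indicator_of_mem hs]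
    · rw [Set.indicator_of_notMem hs, hsupp s hs, zero_mul]
  rw [heq]
  exact (integrable_indicator_iff measurableSet_Icc).mpr hfull

lemma psiF_zero (w : ℝ → ℝ) (R : ℝ) (hR : 0 < R)
    (hsupp : ∀ s, s ∉ Set.Icc (-R) R → w s = 0) (x : ℝ) (hx : R ≤ x) :
    psiF w x = 0 := by
  unfold psiF
  rw [setIntegral_congr_fun measurableSet_Ioi (g := fun _ => (0:ℝ)) (fun p hp => ?_)]
  · simp
  · have : x + p ∉ Set.Icc (-R) R := by
      intro hmem
      have := hmem.2
      have hp' : 0 < p := hp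
      linarith
    rw [hsupp _ this, zero_mul]

lemma psiF_cont (w : ℝ → ℝ) (Cw : ℝ) (hCw : ∀ y, |w y| ≤ Cw) (hwm : Continuous w)
    (R : ℝ) (hR : 0 < R) (hsupp : ∀ s, s ∉ Set.Icc (-R) R → w s = 0) :
    Continuous (psiF w) := by
  unfold psiF
  apply continuous_const.mul
  rw [continuous_iff_continuousAt]
  intro x₀
  set B := R + |x₀| + 1 with hB
  have hBpos : 0 < B := by positivity
  apply continuousAt_of_dominated (bound := fun p =>
      Set.indicator (Set.Ioc (0:ℝ) B) (fun p => Cw * p ^ (-(1/2) : ℝ)) p)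
  · filter_upwards with x
    have heq2 : (fun p : ℝ => w (x + p) * p ^ (-(1/2) : ℝ))
        = fun p : ℝ => w (x + p) * (Real.sqrt p)⁻¹ := by
      funext p; rw [Keq']
    rw [heq2]
    exact ((hwm.comp (continuous_const.add continuous_id)).aestronglyMeasurable.mul
      (Real.continuous_sqrt.measurable.inv.aestronglyMeasurable))
  · filter_upwards [Metric.ball_mem_nhds x₀ one_pos] with x hx
    rw [ae_restrict_iff' measurableSet_Ioi]
    filter_upwards with p hp
    have hp0 : 0 < p := hp
    by_cases hpB : p ≤ B
    · rw [Set.indicator_of_mem (Set.mem_Ioc.mpr ⟨hp0, hpB⟩)]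
      rw [norm_mul]
      apply mul_le_mul (by simpa using hCw (x + p)) (le_of_eq ?_) (norm_nonneg _)
        ((abs_nonneg _).trans (hCw 0))
      rw [Real.norm_eq_abs, abs_of_nonneg (Knonneg' p)]
    · rw [Set.indicator_of_notMem (by simp [hpB])]
      have hxx : |x - x₀| < 1 := by
        rw [← Real.dist_eq]; exact hx
      have : x + p ∉ Set.Icc (-R) R := by
        intro hmem
        have h2 := hmem.2
        have : B < p := lt_of_not_ge hpB
        have : x₀ - 1 < x := by cases' abs_lt.mp hxx with h h; linarith
        have hxlb : -|x₀| - 1 < x := by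
          have := neg_abs_le x₀; linarith
        linarith
      rw [hsupp _ this, zero_mul, norm_zero]
  · rw [integrable_indicator_iff measurableSet_Ioc, IntegrableOn,
      Measure.restrict_restrict measurableSet_Ioc,
      Set.inter_eq_self_of_subset_left Set.Ioc_subset_Ioi_self]
    apply Integrable.const_mul
    have h1 : IntervalIntegrable (fun t : ℝ => t ^ (-(1/2) : ℝ)) volume 0 B :=
      intervalIntegral.intervalIntegrable_rpow' (by norm_num)
    exact (intervalIntegrable_iff_integrableOn_Ioc_of_le hBpos.le).mp h1
  · filter_upwards with p
    exact ((hwm.comp (continuous_id.add continuous_const)).continuousAt).mul continuousAt_const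

lemma psiF_bound (w : ℝ → ℝ) (Cw : ℝ) (hCw : ∀ y, |w y| ≤ Cw) (hwm : Continuous w)
    (R : ℝ) (hR : 0 < R) (hsupp : ∀ s, s ∉ Set.Icc (-R) R → w s = 0) (x : ℝ) :
    |psiF w x| ≤ Cw * Real.sqrt (2*R) := by
  have hCw0 : 0 ≤ Cw := (abs_nonneg _).trans (hCw 0)
  have hker := ker_int R x hR
  rw [psiF_eq, abs_mul, abs_of_pos (by norm_num : (0:ℝ) < 1/2)]
  have hgint : Integrable (Set.indicator (Set.Icc (-R) R)
      fun s => Cw * (s - x) ^ (-(1/2) : ℝ)) :=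
    (integrable_indicator_iff measurableSet_Icc).mpr (hker.const_mul Cw)
  have hIb : ‖∫ s, w s * (s - x) ^ (-(1/2) : ℝ)‖ ≤ ∫ s, Set.indicator (Set.Icc (-R) R)
      (fun s => Cw * (s - x) ^ (-(1/2) : ℝ)) s := by
    apply norm_integral_le_of_norm_le hgint
    filter_upwards with s
    by_cases hs : s ∈ Set.Icc (-R) R
    · rw [Set.indicator_of_mem hs, Real.norm_eq_abs, abs_mul, abs_of_nonneg (Knonneg' _)]
      exact mul_le_mul_of_nonneg_right (hCw s) (Knonneg' _)
    · rw [Set.indicator_of_notMem hs, hsupp s hs, zero_mul, norm_zero]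
  have hJ : ∫ s, Set.indicator (Set.Icc (-R) R) (fun s => Cw * (s - x) ^ (-(1/2) : ℝ)) s
      = Cw * ∫ s in Set.Icc (-R) R, (s - x) ^ (-(1/2) : ℝ) := by
    rw [integral_indicator measurableSet_Icc, integral_const_mul]
  have hJ2 : ∫ s in Set.Icc (-R) R, (s - x) ^ (-(1/2) : ℝ)
      = 2 * (Real.sqrt (R - x) - Real.sqrt (-R - x)) := by
    open intervalIntegral in
    rw [integral_Icc_eq_integral_Ioc,
      ← intervalIntegral.integral_of_le (by linarith : -R ≤ R),
      intervalIntegral.integral_comp_sub_right (fun t : ℝ => t ^ (-(1/2) : ℝ)) x,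
      integral_rpow (Or.inl (by norm_num))]
    rw [show (-(1/2) : ℝ) + 1 = 1/2 by norm_num, ← Real.sqrt_eq_rpow, ← Real.sqrt_eq_rpow]
    ring
  have hle : Real.sqrt (R - x) - Real.sqrt (-R - x) ≤ Real.sqrt (2*R) := by
    have := sqrt_sub_sqrt_le' (-R - x) (R - x)
    rwa [show R - x - (-R - x) = 2*R by ring] at this
  have hfin : ∫ s, Set.indicator (Set.Icc (-R) R) (fun s => Cw * (s - x) ^ (-(1/2) : ℝ)) s
      ≤ Cw * (2 * Real.sqrt (2*R)) := by
    rw [hJ, hJ2]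
    nlinarith
  calc (1/2) * |∫ s, w s * (s - x) ^ (-(1/2) : ℝ)|
      ≤ (1/2) * (Cw * (2 * Real.sqrt (2*R))) := by
        apply mul_le_mul_of_nonneg_left _ (by norm_num)
        exact le_trans hIb hfin
    _ = Cw * Real.sqrt (2*R) := by ring

lemma psiF_diff (w : ℝ → ℝ) (Cw : ℝ) (hCw : ∀ y, |w y| ≤ Cw) (hwm : Continuous w)
    (R : ℝ) (hR : 0 < R) (hsupp : ∀ s, s ∉ Set.Icc (-R) R → w s = 0)
    (x h m : ℝ) (hm : 0 < m) (hcond : m + |h| ≤ -x - R) :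
    |psiF w (x + h) - psiF w x| ≤ Cw * R * |h| / (2 * m * Real.sqrt m) := by
  have hCw0 : 0 ≤ Cw := (abs_nonneg _).trans (hCw 0)
  set c := Cw * (|h| / (2 * m * Real.sqrt m)) with hc
  have hc0 : 0 ≤ c := by positivity
  rw [psiF_eq, psiF_eq, ← mul_sub,
    ← integral_sub (int_wK w Cw hCw hwm R hR hsupp (x + h)) (int_wK w Cw hCw hwm R hR hsupp x),
    abs_mul, abs_of_pos (by norm_num : (0:ℝ) < 1/2)]
  have hgint : Integrable (Set.indicator (Set.Icc (-R) R) (fun _ : ℝ => c)) :=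
    (integrable_indicator_iff measurableSet_Icc).mpr
      (integrableOn_const measure_Icc_lt_top.ne)
  have hIb : ‖∫ s, (w s * (s - (x + h)) ^ (-(1/2) : ℝ) - w s * (s - x) ^ (-(1/2) : ℝ))‖
      ≤ ∫ s, Set.indicator (Set.Icc (-R) R) (fun _ : ℝ => c) s := by
    apply norm_integral_le_of_norm_le hgint
    filter_upwards with s
    by_cases hs : s ∈ Set.Icc (-R) R
    · rw [Set.indicator_of_mem hs]
      have e : w s * (s - (x + h)) ^ (-(1/2) : ℝ) - w s * (s - x) ^ (-(1/2) : ℝ)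
          = w s * ((s - (x + h)) ^ (-(1/2) : ℝ) - (s - x) ^ (-(1/2) : ℝ)) := by ring
      rw [e, Real.norm_eq_abs, abs_mul, Keq', Keq']
      have hsl : -R ≤ s := hs.1
      have hka : m ≤ s - (x + h) := by
        have := le_abs_self h; linarith
      have hkb : m ≤ s - x := by
        have := abs_nonneg h; linarith
      have hdiff := kernel_lip' hm hka hkb
      rw [show s - (x + h) - (s - x) = -h by ring, abs_neg] at hdiff
      exact mul_le_mul (hCw s) hdiff (abs_nonneg _) hCw0
    · rw [Set.indicator_of_notMem hs]
      simp [hsupp s hs]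
  have hJ : ∫ s, Set.indicator (Set.Icc (-R) R) (fun _ : ℝ => c) s = (2*R) * c := by
    rw [integral_indicator measurableSet_Icc, setIntegral_const, Real.volume_real_Icc_of_le (by linarith : -R ≤ R),
      smul_eq_mul]
    ring
  calc (1/2) * ‖∫ s, (w s * (s - (x + h)) ^ (-(1/2) : ℝ) - w s * (s - x) ^ (-(1/2) : ℝ))‖
      ≤ (1/2) * ((2*R) * c) := by
        apply mul_le_mul_of_nonneg_left _ (by norm_num)
        exact hIb.trans_eq hJ
    _ = Cw * R * |h| / (2 * m * Real.sqrt m) := by rw [hc]; ring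

lemma summable_nat_invsqrt : Summable (fun n : ℕ => ((n : ℝ) * Real.sqrt n)⁻¹) := by
  apply (Real.summable_nat_rpow.mpr (by norm_num : (-(3/2) : ℝ) < -1)).congr
  intro n
  rcases Nat.eq_zero_or_pos n with h | h
  · subst h; simp
  · have hn : (0:ℝ) < n := by exact_mod_cast h
    rw [Real.rpow_neg hn.le]
    congr 1
    rw [show ((3:ℝ)/2) = 1 + 1/2 by norm_num, Real.rpow_add hn, Real.rpow_one,
      ← Real.sqrt_eq_rpow]

lemma summable_int_invsqrt : Summable (fun k : ℤ => (|(k : ℝ)| * Real.sqrt |(k : ℝ)|)⁻¹) := by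
  apply Summable.of_nat_of_neg
  · apply summable_nat_invsqrt.congr
    intro n
    have : |((n : ℤ) : ℝ)| = (n : ℝ) := by
      rw [Int.cast_natCast, abs_of_nonneg (Nat.cast_nonneg n)]
    rw [this]
  · apply summable_nat_invsqrt.congr
    intro n
    have : |((-(n : ℤ) : ℤ) : ℝ)| = (n : ℝ) := by
      push_cast
      rw [abs_neg, abs_of_nonneg (Nat.cast_nonneg n)]
    rw [this]

lemma summable_finite_if (N : ℝ) (C : ℝ) :
    Summable (fun k : ℤ => if |(k : ℝ)| ≤ N then C else 0) := by
  apply summable_of_finite_support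
  apply Set.Finite.subset (Set.finite_Icc (-(⌈N⌉ : ℤ)) ⌈N⌉)
  intro k hk
  simp only [Function.mem_support] at hk
  by_cases h : |(k : ℝ)| ≤ N
  · have h1 : |(k : ℝ)| ≤ (⌈N⌉ : ℝ) := h.trans (Int.le_ceil N)
    rw [← Int.cast_abs] at h1
    have h2 : |k| ≤ ⌈N⌉ := by exact_mod_cast h1
    exact Set.mem_Icc.mpr (abs_le.mp h2)
  · simp [h] at hk

lemma w_cont (w w' : ℝ → ℝ) (q : ℝ) (hq : 2 < q)
    (hw'Lq : MemLp w' (ENNReal.ofReal q) volume)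
    (hwAC : ∀ x : ℝ, w x = w 0 + ∫ t in (0:ℝ)..x, w' t) : Continuous w := by
  have hloc : ∀ a b : ℝ, IntervalIntegrable w' volume a b := by
    intro a b
    rw [intervalIntegrable_iff]
    haveI : IsFiniteMeasure (volume.restrict (Set.uIoc a b)) :=
      ⟨by rw [Measure.restrict_apply_univ]; exact measure_Ioc_lt_top⟩
    have h1 : MemLp w' (ENNReal.ofReal q) (volume.restrict (Set.uIoc a b)) :=
      hw'Lq.restrict _
    have h2 : MemLp w' 1 (volume.restrict (Set.uIoc a b)) :=
      h1.mono_exponent (ENNReal.one_le_ofReal.mpr (by linarith))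
    exact memLp_one_iff_integrable.mp h2
  have hcont := intervalIntegral.continuous_primitive hloc 0
  have heq : w = fun x => w 0 + ∫ t in (0:ℝ)..x, w' t := funext hwAC
  rw [heq]
  exact continuous_const.add hcont

theorem stmt_3 (w : ℝ → ℝ) (hwSupp : HasCompactSupport w)
    (hwInt : ∫ p, w p = 1)
    (q : ℝ) (hq : 2 < q) (w' : ℝ → ℝ)
    (hw'Lq : MemLp w' (ENNReal.ofReal q) volume)
    (hwAC : ∀ x : ℝ, w x = w 0 + ∫ t in (0:ℝ)..x, w' t) :
    ContinuousOn (fun p : ℝ × ℝ × ℝ => PsiF w p.1 p.2.1 p.2.2)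
      {p : ℝ × ℝ × ℝ | p.2.1 ≠ 0} := by
  have hw : Continuous w := w_cont w w' q hq hw'Lq hwAC
  obtain ⟨Cw, hCwn⟩ := hwSupp.exists_bound_of_continuous hw
  have hCw : ∀ y, |w y| ≤ Cw := fun y => by simpa using hCwn y
  have hCw0 : 0 ≤ Cw := (abs_nonneg _).trans (hCw 0)
  obtain ⟨R0, hR0⟩ := hwSupp.isBounded.subset_closedBall 0
  set R := max R0 1 with hRdef
  have hR : (0:ℝ) < R := lt_of_lt_of_le one_pos (le_max_right _ _)
  have hsupp : ∀ s, s ∉ Set.Icc (-R) R → w s = 0 := by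
    intro s hs
    apply image_eq_zero_of_notMem_tsupport
    intro hmem
    apply hs
    have h1 := hR0 hmem
    rw [Metric.mem_closedBall, Real.dist_eq, sub_zero] at h1
    have h2 : |s| ≤ R := h1.trans (le_max_left _ _)
    exact Set.mem_Icc.mpr (abs_le.mp h2)
  have hψc : Continuous (psiF w) := psiF_cont w Cw hCw hw R hR hsupp
  intro p₀ hp₀
  apply ContinuousAt.continuousWithinAt
  obtain ⟨h₀, a₀, r₀⟩ := p₀
  have ha₀ : a₀ ≠ 0 := hp₀
  set ε := |a₀| / 2 with hε
  have ha₀pos : 0 < |a₀| := abs_pos.mpr ha₀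
  have hεpos : 0 < ε := by rw [hε]; linarith
  set δ := min 1 ε with hδ
  have hδpos : 0 < δ := lt_min one_pos hεpos
  set H := |h₀| + 1 with hHdef
  set Rr := |r₀| + 1 with hRrdef
  have hH : 0 < H := by positivity
  have hRr : 0 < Rr := by positivity
  set N : ℝ := 2*Rr + 6*(R + H + 1)/ε with hN
  have hNpos : 0 < N := by positivity
  set Cψ := Cw * Real.sqrt (2*R) with hCψ
  have hCψ0 : 0 ≤ Cψ := mul_nonneg hCw0 (Real.sqrt_nonneg _)
  set Mk : ℤ → ℝ := fun k => ε * (|(k:ℝ)| - Rr) - (R + H) with hMk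
  set T : ℤ → ℝ × ℝ × ℝ → ℝ := fun k p =>
    psiF w (p.2.1 * ((k:ℝ) - p.2.2) + p.1) - psiF w (p.2.1 * ((k:ℝ) - p.2.2)) with hT
  set u : ℤ → ℝ := fun k => if |(k:ℝ)| ≤ N then 2*Cψ
    else Cw * R * H / (2 * Mk k * Real.sqrt (Mk k)) with hu
  set S := Metric.closedBall ((h₀, a₀, r₀) : ℝ × ℝ × ℝ) δ with hSdef
  clear_value S u T Mk Cψ N Rr H δ ε
  -- facts about Mk
  have hMk1 : ∀ k : ℤ, N < |(k:ℝ)| → 1 ≤ Mk k ∧ (ε/4) * |(k:ℝ)| ≤ Mk k := by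
    intro k hk
    have hkey : 6*(R + H + 1) < ε * (|(k:ℝ)| - 2*Rr) := by
      have h1 : 6*(R + H + 1)/ε < |(k:ℝ)| - 2*Rr := by
        rw [hN] at hk; linarith
      calc 6*(R + H + 1) = (6*(R + H + 1)/ε) * ε := by field_simp
        _ < (|(k:ℝ)| - 2*Rr) * ε := by
            apply mul_lt_mul_of_pos_right h1 hεpos
        _ = ε * (|(k:ℝ)| - 2*Rr) := by ring
    have hRrε : 0 < ε * Rr := mul_pos hεpos hRr
    constructor
    · simp only [hMk]; nlinarith
    · simp only [hMk]; nlinarith [abs_nonneg ((k:ℝ))]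
  -- nonnegativity of u
  have hu0 : ∀ k, 0 ≤ u k := by
    intro k
    simp only [hu]
    by_cases hk : |(k:ℝ)| ≤ N
    · rw [if_pos hk]; linarith
    · rw [if_neg hk]
      obtain ⟨hM1, _⟩ := hMk1 k (lt_of_not_ge hk)
      have hMpos : 0 < Mk k := lt_of_lt_of_le one_pos hM1
      apply div_nonneg (mul_nonneg (mul_nonneg hCw0 hR.le) hH.le)
      positivity
  -- membership facts
  have hS : ∀ p : ℝ × ℝ × ℝ, p ∈ S → |p.1 - h₀| ≤ δ ∧ |p.2.1 - a₀| ≤ δ ∧ |p.2.2 - r₀| ≤ δ := by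
    intro p hp
    rw [hSdef, Metric.mem_closedBall, Prod.dist_eq, max_le_iff, Prod.dist_eq, max_le_iff] at hp
    exact ⟨by rw [← Real.dist_eq]; exact hp.1, by rw [← Real.dist_eq]; exact hp.2.1,
      by rw [← Real.dist_eq]; exact hp.2.2⟩
  -- the key uniform bound
  have hTb : ∀ (k : ℤ) (p : ℝ × ℝ × ℝ), p ∈ S → ‖T k p‖ ≤ u k := by
    intro k p hp
    obtain ⟨h, a, r⟩ := p
    obtain ⟨hp1, hp2, hp3⟩ := hS _ hp
    simp only at hp1 hp2 hp3
    have hδ1 : δ ≤ 1 := by rw [hδ]; exact min_le_left _ _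
    have hδε : δ ≤ ε := by rw [hδ]; exact min_le_right _ _
    have hhH : |h| ≤ H := by
      have := abs_add_le h₀ (h - h₀)
      simp only [add_sub_cancel] at this
      rw [hHdef]; have := abs_sub_abs_le_abs_sub h h₀; linarith
    have hrR : |r| ≤ Rr := by
      rw [hRrdef]; have := abs_sub_abs_le_abs_sub r r₀; linarith
    have haε : ε ≤ |a| := by
      have h1 : |a₀| - |a| ≤ |a - a₀| := by
        rw [abs_sub_comm]; exact abs_sub_abs_le_abs_sub a₀ a
      rw [hε] at hεpos ⊢; linarith [hε ▸ le_refl ε]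
    set x := a * ((k:ℝ) - r) with hx
    have hTval : T k (h, a, r) = psiF w (x + h) - psiF w x := by rw [hT, hx]
    clear_value x
    rw [hTval, Real.norm_eq_abs]
    by_cases hk : |(k:ℝ)| ≤ N
    · simp only [hu, if_pos hk]
      have hb1 := psiF_bound w Cw hCw hw R hR hsupp (x + h)
      have hb2 := psiF_bound w Cw hCw hw R hR hsupp x
      have htri : |psiF w (x + h) - psiF w x| ≤ |psiF w (x + h)| + |psiF w x| :=
        abs_sub _ _
      rw [hCψ]; linarith
    · push_neg at hk
      obtain ⟨hM1, hM4⟩ := hMk1 k hk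
      have hMpos : 0 < Mk k := lt_of_lt_of_le one_pos hM1
      have hkRr : Rr ≤ |(k:ℝ)| := by
        rw [hN] at hk
        have : 0 < 6*(R + H + 1)/ε := by positivity
        linarith
      have hkr : |(k:ℝ)| - Rr ≤ |(k:ℝ) - r| := by
        have := abs_sub_abs_le_abs_sub (k:ℝ) r
        linarith
      have hxl : Mk k + R + H ≤ |x| := by
        rw [hx, abs_mul]
        calc Mk k + R + H = ε * (|(k:ℝ)| - Rr) := by rw [hMk]; ring
          _ ≤ |a| * |(k:ℝ) - r| :=
            mul_le_mul haε hkr (by linarith) (abs_nonneg a)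
      simp only [hu, if_neg (not_le.mpr hk)]
      have hrhs0 : 0 ≤ Cw * R * H / (2 * Mk k * Real.sqrt (Mk k)) := by
        apply div_nonneg (mul_nonneg (mul_nonneg hCw0 hR.le) hH.le)
        positivity
      rcases le_or_gt 0 x with hx0 | hx0
      · have hxv : |x| = x := abs_of_nonneg hx0
        have hz1 : psiF w x = 0 := psiF_zero w R hR hsupp x (by linarith [hxl, hxv])
        have hz2 : psiF w (x + h) = 0 := by
          apply psiF_zero w R hR hsupp
          have := neg_abs_le h
          rw [hxv] at hxl
          linarith
        rw [hz1, hz2]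
        simpa using hrhs0
      · have hxv : |x| = -x := abs_of_neg hx0
        set m := -x - R - |h| with hm
        clear_value m
        have hmM : Mk k ≤ m := by rw [hm]; rw [hxv] at hxl; linarith
        have hmpos : 0 < m := lt_of_lt_of_le hMpos hmM
        have hdiff := psiF_diff w Cw hCw hw R hR hsupp x h m hmpos (by rw [hm]; linarith)
        calc |psiF w (x + h) - psiF w x| ≤ Cw * R * |h| / (2 * m * Real.sqrt m) := hdiff
          _ = (Cw * R * |h| / 2) * (m * Real.sqrt m)⁻¹ := by ring
          _ ≤ (Cw * R * H / 2) * ((Mk k) * Real.sqrt (Mk k))⁻¹ := by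
              apply mul_le_mul
              · apply div_le_div_of_nonneg_right _ (by norm_num)
                exact mul_le_mul_of_nonneg_left hhH (mul_nonneg hCw0 hR.le)
              · exact inv_msqrt_mono hMpos hmM
              · positivity
              · positivity
          _ = Cw * R * H / (2 * Mk k * Real.sqrt (Mk k)) := by ring
  -- summability of u
  have hsum : Summable u := by
    set c := ε/4 with hcdef
    have hcpos : 0 < c := by positivity
    set D := Cw * R * H / (2 * c * Real.sqrt c) with hD
    have hD0 : 0 ≤ D := by
      apply div_nonneg (mul_nonneg (mul_nonneg hCw0 hR.le) hH.le)
      positivity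
    clear_value c D
    apply Summable.of_nonneg_of_le (f := fun k : ℤ =>
      (if |(k:ℝ)| ≤ N then 2*Cψ else 0) + D * ((|(k:ℝ)|) * Real.sqrt (|(k:ℝ)|))⁻¹) hu0
    · intro k
      by_cases hk : |(k:ℝ)| ≤ N
      · simp only [hu, if_pos hk]
        have : 0 ≤ D * ((|(k:ℝ)|) * Real.sqrt (|(k:ℝ)|))⁻¹ := by positivity
        linarith
      · simp only [hu, if_neg hk]
        obtain ⟨hM1, hM4⟩ := hMk1 k (lt_of_not_ge hk)
        have hMpos : 0 < Mk k := lt_of_lt_of_le one_pos hM1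
        have hkpos : 0 < |(k:ℝ)| := lt_trans hNpos (lt_of_not_ge hk)
        have hck : 0 < c * |(k:ℝ)| := mul_pos hcpos hkpos
        have hckM : c * |(k:ℝ)| ≤ Mk k := hM4
        have step1 : Cw * R * H / (2 * Mk k * Real.sqrt (Mk k))
            ≤ (Cw * R * H / 2) * ((c * |(k:ℝ)|) * Real.sqrt (c * |(k:ℝ)|))⁻¹ := by
          calc Cw * R * H / (2 * Mk k * Real.sqrt (Mk k))
              = (Cw * R * H / 2) * ((Mk k) * Real.sqrt (Mk k))⁻¹ := by ring
            _ ≤ (Cw * R * H / 2) * ((c * |(k:ℝ)|) * Real.sqrt (c * |(k:ℝ)|))⁻¹ := by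
                apply mul_le_mul_of_nonneg_left (inv_msqrt_mono hck hckM)
                positivity
        have step2 : (Cw * R * H / 2) * ((c * |(k:ℝ)|) * Real.sqrt (c * |(k:ℝ)|))⁻¹
            = D * ((|(k:ℝ)|) * Real.sqrt (|(k:ℝ)|))⁻¹ := by
          rw [Real.sqrt_mul hcpos.le, hD]
          ring
        rw [step2] at step1
        linarith
    · exact (summable_finite_if N (2*Cψ)).add (summable_int_invsqrt.mul_left D)
  -- uniform convergence ⇒ continuity
  have hTU := tendstoUniformlyOn_tsum hsum hTb (s := S)
  have hTcont : ∀ k : ℤ, Continuous (T k) := by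
    intro k
    have c1 : Continuous (fun p : ℝ × ℝ × ℝ => p.2.1 * ((k:ℝ) - p.2.2)) := by fun_prop
    have c2 : Continuous (fun p : ℝ × ℝ × ℝ => p.2.1 * ((k:ℝ) - p.2.2) + p.1) := by fun_prop
    rw [hT]
    exact (hψc.comp c2).sub (hψc.comp c1)
  have hcontOn : ContinuousOn (fun p => ∑' k : ℤ, T k p) S := by
    apply hTU.continuousOn
    refine Filter.Eventually.frequently (Filter.Eventually.of_forall fun t => ?_)
    exact (continuous_finset_sum t (fun k _ => hTcont k)).continuousOn
  have hca : ContinuousAt (fun p => ∑' k : ℤ, T k p) (h₀, a₀, r₀) :=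
    hcontOn.continuousAt (by rw [hSdef]; exact Metric.closedBall_mem_nhds _ hδpos)
  have hopen : IsOpen {p : ℝ × ℝ × ℝ | p.2.1 ≠ 0} := by
    have : {p : ℝ × ℝ × ℝ | p.2.1 ≠ 0} = (fun p : ℝ × ℝ × ℝ => p.2.1) ⁻¹' ({0}ᶜ) := rfl
    rw [this]
    exact isOpen_compl_singleton.preimage (continuous_fst.comp continuous_snd)
  have heqf : (fun p : ℝ × ℝ × ℝ => PsiF w p.1 p.2.1 p.2.2)
      =ᶠ[nhds ((h₀, a₀, r₀) : ℝ × ℝ × ℝ)] fun p => ∑' k : ℤ, T k p := by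
    filter_upwards [hopen.mem_nhds (show ((h₀, a₀, r₀) : ℝ×ℝ×ℝ) ∈ _ from ha₀)] with p hp
    simp only [PsiF, if_neg hp, hT]
  exact hca.congr heqf.symm
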